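/- Let G be a tree with at least two vertices and let S be a perfect critical set of G with S ≠ V. Then the induced subgraph G[S] is disconnected. -/

import Mathlib

open Matrix
open scoped Classical

/-- `S` is a critical set of `G`: `S` is nonempty and there is a nonzero eigenvector of the
Laplacian of `G` vanishing outside `S`. -/
def IsCriticalSet {V : Type*} [Fintype V] [DecidableEq V] (G : SimpleGraph V) (S : Set V) :
    Prop :=
  S.Nonempty ∧ ∃ (lam : ℝ) (y : V → ℝ), y ≠ 0 ∧
    G.lapMatrix ℝ *ᵥ y = lam • y ∧ ∀ v ∉ S, y v = 0

/-- `S` is a perfect critical set of `G`: some inducing eigenvector vanishes outside `S` and is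
nonzero at every vertex of `S`. -/
def IsPerfectCriticalSet {V : Type*} [Fintype V] [DecidableEq V] (G : SimpleGraph V)
    (S : Set V) : Prop :=
  S.Nonempty ∧ ∃ (lam : ℝ) (y : V → ℝ), y ≠ 0 ∧
    G.lapMatrix ℝ *ᵥ y = lam • y ∧ (∀ v ∉ S, y v = 0) ∧ ∀ v ∈ S, y v ≠ 0

/-- `S` is a minimal perfect critical set of `G`: a perfect critical set none of whose proper
subsets is a perfect critical set. -/
def IsMinimalPerfectCriticalSet {V : Type*} [Fintype V] [DecidableEq V] (G : SimpleGraph V)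
    (S : Set V) : Prop :=
  IsPerfectCriticalSet G S ∧ ∀ T : Set V, T ⊂ S → ¬ IsPerfectCriticalSet G T

lemma exists_boundary_edge {V : Type*} (G : SimpleGraph V) (S : Set V) :
    ∀ {a b : V} (_ : G.Walk a b), a ∉ S → b ∈ S →
    ∃ u w, G.Adj u w ∧ u ∉ S ∧ w ∈ S := by
  intro a b p
  induction p with
  | nil => intro ha hb; exact absurd hb ha
  | @cons x c _ h p ih =>
    intro ha hb
    by_cases hc : c ∈ S
    · exact ⟨x, c, h, ha, hc⟩
    · exact ih hc hb

/-- Proposition: a nontrivial perfect critical set of a tree induces a disconnected subgraph. -/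
theorem pcs_of_tree_induces_disconnected {V : Type*} [Fintype V] [DecidableEq V]
    (G : SimpleGraph V) (hG : G.IsTree) (hcard : 2 ≤ Fintype.card V)
    (S : Set V) (hS : IsPerfectCriticalSet G S) (hSV : S ≠ Set.univ) :
    ¬ (G.induce S).Connected := by
  intro hconn
  obtain ⟨hne, lam, y, hy0, heig, hyz, hyne⟩ := hS
  obtain ⟨s, hs⟩ := hne
  have hv : ∃ v, v ∉ S := by
    by_contra h
    push_neg at h
    exact hSV (Set.eq_univ_iff_forall.mpr h)
  obtain ⟨v, hvS⟩ := hv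
  obtain ⟨p⟩ := hG.isConnected.preconnected v s
  obtain ⟨u, w, hadj, huS, hwS⟩ := exists_boundary_edge G S p hvS hs
  -- uniqueness of neighbor of u in S
  have huniq : ∀ w' ∈ S, G.Adj u w' → w' = w := by
    intro w' hw' hadj'
    by_contra hneq
    obtain ⟨q⟩ := hconn.preconnected ⟨w', hw'⟩ ⟨w, hwS⟩
    let q' : (G.induce S).Path ⟨w', hw'⟩ ⟨w, hwS⟩ := q.toPath
    have hqm : ((q' : (G.induce S).Walk ⟨w', hw'⟩ ⟨w, hwS⟩).map
        ((SimpleGraph.Embedding.induce S : G.induce S ↪g G)).toHom).IsPath :=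
      SimpleGraph.Walk.map_isPath_of_injective ((SimpleGraph.Embedding.induce S : G.induce S ↪g G)).injective q'.prop
    set qm : G.Walk w' w :=
      (q' : (G.induce S).Walk ⟨w', hw'⟩ ⟨w, hwS⟩).map
        ((SimpleGraph.Embedding.induce S : G.induce S ↪g G)).toHom with hqmdef
    have husup : u ∉ qm.support := by
      intro hu
      replace hu : u ∈ ((q' : (G.induce S).Walk ⟨w', hw'⟩ ⟨w, hwS⟩).map
          ((SimpleGraph.Embedding.induce S : G.induce S ↪g G)).toHom).support := hu
      rw [SimpleGraph.Walk.support_map] at hu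
      obtain ⟨⟨z, hz⟩, _, hzeq⟩ := List.mem_map.mp hu
      exact huS (hzeq ▸ hz)
    have hp2 : (SimpleGraph.Walk.cons hadj' qm).IsPath := hqm.cons husup
    have hp1 : (SimpleGraph.Walk.cons hadj (SimpleGraph.Walk.nil : G.Walk w w)).IsPath := by
      simp [SimpleGraph.Walk.isPath_iff_eq_nil, hadj.ne]
    have := hG.IsAcyclic.path_unique ⟨_, hp2⟩ ⟨_, hp1⟩
    have hmem : w' ∈ (SimpleGraph.Walk.cons hadj' qm).support := by
      simp [SimpleGraph.Walk.support_cons]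
    have heq : SimpleGraph.Walk.cons hadj' qm = SimpleGraph.Walk.cons hadj SimpleGraph.Walk.nil :=
      congrArg Subtype.val this
    rw [heq] at hmem
    simp only [SimpleGraph.Walk.support_cons, SimpleGraph.Walk.support_nil,
      List.mem_cons, List.mem_singleton, List.not_mem_nil, or_false] at hmem
    rcases hmem with h1 | h1
    · exact huS (h1 ▸ hw')
    · exact hneq h1
  -- eigen equation at u
  have he : (G.lapMatrix ℝ *ᵥ y) u = lam • y u := congrFun heig u
  rw [SimpleGraph.lapMatrix_mulVec_apply] at he
  have hyu : y u = 0 := hyz u huS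
  have hsum : ∑ x ∈ G.neighborFinset u, y x = y w := by
    apply Finset.sum_eq_single_of_mem
    · exact (G.mem_neighborFinset u w).mpr hadj
    · intro x hx hxw
      by_cases hxS : x ∈ S
      · exact absurd (huniq x hxS ((G.mem_neighborFinset u x).mp hx)) hxw
      · exact hyz x hxS
  rw [hsum, hyu] at he
  simp only [mul_zero, zero_sub, smul_zero] at he
  exact hyne w hwS (by linarith)
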